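/- Let Z_1, …, Z_n (n ≥ 1) be independent, identically distributed exponential random variables with rate 1 (unit mean), and let 0 < r < 1. Then, as S → ∞, −log P( Z_1 + ⋯ + Z_n < (S^r − 1)/S ) / log S tends to n·(1 − r). -/

import Mathlib

open Real Filter MeasureTheory ProbabilityTheory

lemma expMeasure_one_Iic (t : ℝ) :
    expMeasure 1 (Set.Iic t) = ENNReal.ofReal (if 0 ≤ t then 1 - Real.exp (-t) else 0) := by
  have h : expMeasure 1 (Set.Iic t) = ∫⁻ y in Set.Iic t, exponentialPDF 1 y := by
    rw [expMeasure, gammaMeasure, withDensity_apply _ measurableSet_Iic]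
    rfl
  rw [h, lintegral_exponentialPDF_eq_antiDeriv one_pos t]
  simp

lemma expMeasure_one_Iio (t : ℝ) :
    expMeasure 1 (Set.Iio t) = ENNReal.ofReal (if 0 ≤ t then 1 - Real.exp (-t) else 0) := by
  rw [← expMeasure_one_Iic]
  have hIio : Set.Iio t = Set.Iic t \ {t} := by
    ext x; simp [lt_iff_le_and_ne]
  have hsing : expMeasure 1 ({t} : Set ℝ) = 0 := by
    have : expMeasure 1 ({t} : Set ℝ) = ∫⁻ y in ({t} : Set ℝ), exponentialPDF 1 y := by
      rw [expMeasure, gammaMeasure, withDensity_apply _ (measurableSet_singleton t)]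
      rfl
    rw [this, setLIntegral_measure_zero _ _ (measure_singleton t)]
  rw [hIio, measure_diff_null hsing]

/-- For `0 ≤ x`, `x * exp (-x) ≤ 1 - exp (-x)`. -/
lemma one_sub_exp_neg_ge (x : ℝ) : x * Real.exp (-x) ≤ 1 - Real.exp (-x) := by
  have h := Real.add_one_le_exp x
  have hpos := Real.exp_pos (-x)
  have hmul : (x + 1) * Real.exp (-x) ≤ Real.exp x * Real.exp (-x) :=
    mul_le_mul_of_nonneg_right h hpos.le
  rw [← Real.exp_add, add_neg_cancel, Real.exp_zero] at hmul
  nlinarith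

lemma one_sub_exp_neg_ge_third {x : ℝ} (hx0 : 0 ≤ x) (hx1 : x ≤ 1) :
    x / 3 ≤ 1 - Real.exp (-x) := by
  have h1 := one_sub_exp_neg_ge x
  have h2 : Real.exp (-1 : ℝ) ≤ Real.exp (-x) := Real.exp_le_exp.mpr (by linarith)
  have h3 : (1:ℝ)/3 ≤ Real.exp (-1 : ℝ) := by
    rw [Real.exp_neg]
    have h := Real.exp_one_lt_d9
    have h3 : Real.exp 1 ≤ 3 := by norm_num at h; linarith
    rw [inv_eq_one_div]
    exact one_div_le_one_div_of_le (Real.exp_pos 1) h3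
  have h4 : x * (1/3) ≤ x * Real.exp (-x) :=
    mul_le_mul_of_nonneg_left (le_trans h3 h2) hx0
  nlinarith

/-- If `Z_1, …, Z_n` (`n ≥ 1`) are i.i.d. exponential random
variables with rate `1`, then for `0 < r < 1`,
`−log P(Z_1 + ⋯ + Z_n < (S^r − 1)/S) / log S → n·(1 − r)` as `S → ∞`. -/
theorem diversity_order_sum_iid_exponential
    {Ω : Type*} [MeasurableSpace Ω] (P : Measure Ω) [IsProbabilityMeasure P]
    (n : ℕ) (hn : 1 ≤ n) (Z : Fin n → Ω → ℝ)
    (hmeas : ∀ i, Measurable (Z i))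
    (hindep : iIndepFun Z P)
    (hdist : ∀ i, Measure.map (Z i) P = expMeasure 1)
    (r : ℝ) (hr0 : 0 < r) (hr1 : r < 1) :
    Filter.Tendsto
      (fun S : ℝ =>
        -Real.log ((P {ω | (∑ i, Z i ω) < (S ^ r - 1) / S}).toReal) / Real.log S)
      Filter.atTop (nhds (n * (1 - r))) := by
  have hnR : (1:ℝ) ≤ (n:ℝ) := by exact_mod_cast hn
  have hn0 : (0:ℝ) < n := by linarith
  have hne : Nonempty (Fin n) := ⟨⟨0, hn⟩⟩
  -- probability of single-variable events
  have hPZ : ∀ (i : Fin n) (c : ℝ), P (Z i ⁻¹' Set.Iio c) = expMeasure 1 (Set.Iio c) := by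
    intro i c
    rw [← hdist i, Measure.map_apply (hmeas i) measurableSet_Iio]
  -- independence gives product formula
  have hInt : ∀ c : ℝ, P (⋂ i, Z i ⁻¹' Set.Iio c)
      = (expMeasure 1 (Set.Iio c)) ^ n := by
    intro c
    rw [hindep.meas_iInter (fun i => ⟨Set.Iio c, measurableSet_Iio, rfl⟩)]
    simp [hPZ, Finset.prod_const]
  -- null set of negativity
  have hA : P (⋃ i, Z i ⁻¹' Set.Iio 0) = 0 := by
    refine measure_iUnion_null fun i => ?_
    rw [hPZ, expMeasure_one_Iio]
    simp
  -- the key two-sided bound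
  have key : ∀ t : ℝ, 0 < t → t ≤ 1 →
      (t / (3 * n)) ^ n ≤ (P {ω | (∑ i, Z i ω) < t}).toReal ∧
      (P {ω | (∑ i, Z i ω) < t}).toReal ≤ t ^ n := by
    intro t ht0 ht1
    constructor
    · -- lower bound
      have hsub : (⋂ i, Z i ⁻¹' Set.Iio (t / n)) ⊆ {ω | (∑ i, Z i ω) < t} := by
        intro ω hω
        have : ∀ i, Z i ω < t / n := fun i => Set.mem_iInter.mp hω i
        have hsum : (∑ i, Z i ω) < ∑ _i : Fin n, t / n :=
          Finset.sum_lt_sum_of_nonempty Finset.univ_nonempty (fun i _ => this i)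
        have : (∑ _i : Fin n, t / n) = t := by
          rw [Finset.sum_const, Finset.card_univ, Fintype.card_fin, nsmul_eq_mul]
          field_simp
        simpa [this] using hsum
      have hle := measure_mono (μ := P) hsub
      rw [hInt, expMeasure_one_Iio, if_pos (show (0:ℝ) ≤ t / (n:ℝ) by positivity)] at hle
      have htn : 0 ≤ 1 - Real.exp (-(t / n)) := by
        have := Real.exp_le_one_iff.mpr (neg_nonpos.mpr (by positivity : (0:ℝ) ≤ t / n))
        linarith
      have htop : P {ω | (∑ i, Z i ω) < t} ≠ ⊤ := measure_ne_top P _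
      have h1 := ENNReal.toReal_mono htop hle
      rw [ENNReal.toReal_pow, ENNReal.toReal_ofReal htn] at h1
      refine le_trans ?_ h1
      have hxle : t / n ≤ 1 := by
        rw [div_le_one hn0]; linarith
      have hthird := one_sub_exp_neg_ge_third (by positivity : (0:ℝ) ≤ t / n) hxle
      have hbase : t / (3 * n) ≤ 1 - Real.exp (-(t / n)) := by
        have : t / (3 * n) = (t / n) / 3 := by ring
        rw [this]; exact hthird
      exact pow_le_pow_left₀ (by positivity) hbase n
    · -- upper bound
      have hsub : {ω | (∑ i, Z i ω) < t} ⊆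
          (⋂ i, Z i ⁻¹' Set.Iio t) ∪ (⋃ i, Z i ⁻¹' Set.Iio 0) := by
        intro ω hω
        by_cases hA' : ω ∈ ⋃ i, Z i ⁻¹' Set.Iio 0
        · exact Or.inr hA'
        · refine Or.inl (Set.mem_iInter.mpr fun i => ?_)
          have hnonneg : ∀ j, 0 ≤ Z j ω := by
            intro j
            by_contra h
            exact hA' (Set.mem_iUnion.mpr ⟨j, by simpa using lt_of_not_ge h⟩)
          have hle : Z i ω ≤ ∑ j, Z j ω :=
            Finset.single_le_sum (fun j _ => hnonneg j) (Finset.mem_univ i)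
          exact lt_of_le_of_lt hle hω
      have hle := (measure_mono (μ := P) hsub).trans (measure_union_le _ _)
      rw [hA, add_zero, hInt, expMeasure_one_Iio, if_pos ht0.le] at hle
      have htn : 0 ≤ 1 - Real.exp (-t) := by
        have := Real.exp_le_one_iff.mpr (neg_nonpos.mpr ht0.le)
        linarith
      have h1 := ENNReal.toReal_mono (by simp [ENNReal.pow_ne_top, ENNReal.ofReal_ne_top]) hle
      rw [ENNReal.toReal_pow, ENNReal.toReal_ofReal htn] at h1
      refine h1.trans ?_
      have hbase : 1 - Real.exp (-t) ≤ t := by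
        have := Real.add_one_le_exp (-t)
        linarith
      exact pow_le_pow_left₀ htn hbase n
  -- notation for the threshold
  set c : ℝ := (n : ℝ) * Real.log (3 * n) with hcdef
  have hc0 : 0 ≤ c := by
    apply mul_nonneg hn0.le
    apply Real.log_nonneg
    linarith
  -- lower and upper comparison functions
  set g : ℝ → ℝ := fun S => (n : ℝ) * (-Real.log ((S ^ r - 1) / S)) / Real.log S with hgdef
  have hg_lim : Tendsto g atTop (nhds ((n : ℝ) * (1 - r))) := by
    have h1 : Tendsto (fun S : ℝ => S ^ (-r)) atTop (nhds 0) := tendsto_rpow_neg_atTop hr0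
    have h2 : Tendsto (fun S : ℝ => Real.log (1 - S ^ (-r))) atTop (nhds 0) := by
      have h1' : Tendsto (fun S : ℝ => 1 - S ^ (-r)) atTop (nhds 1) := by
        simpa using tendsto_const_nhds.sub h1
      have := (Real.continuousAt_log (x := 1) one_ne_zero).tendsto.comp h1'
      simpa [Function.comp_def] using this
    have h3 : Tendsto (fun S : ℝ => Real.log (1 - S ^ (-r)) / Real.log S) atTop (nhds 0) :=
      h2.div_atTop Real.tendsto_log_atTop
    have hG : Tendsto (fun S : ℝ => (n : ℝ) * (1 - r - Real.log (1 - S ^ (-r)) / Real.log S))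
        atTop (nhds ((n : ℝ) * (1 - r))) := by
      have := (tendsto_const_nhds (x := (1 - r : ℝ)) (f := atTop)).sub h3
      have := this.const_mul (n : ℝ)
      simpa using this
    refine hG.congr' ?_
    filter_upwards [eventually_gt_atTop (1:ℝ)] with S hS
    have hS0 : (0:ℝ) < S := by linarith
    have hSr1 : 1 < S ^ r := Real.one_lt_rpow_iff_of_pos hS0 |>.mpr (Or.inl ⟨hS, hr0⟩)
    have hSnr : S ^ (-r) < 1 := by
      rw [Real.rpow_neg hS0.le]
      exact inv_lt_one_of_one_lt₀ hSr1
    have hSnr0 : 0 < S ^ (-r) := Real.rpow_pos_of_pos hS0 _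
    have hfac : S ^ r - 1 = S ^ r * (1 - S ^ (-r)) := by
      rw [mul_sub, mul_one, ← Real.rpow_add hS0, add_neg_cancel, Real.rpow_zero]
    have hlog1 : Real.log (S ^ r - 1) = r * Real.log S + Real.log (1 - S ^ (-r)) := by
      rw [hfac, Real.log_mul (by positivity) (by linarith), Real.log_rpow hS0]
    have hlogt : Real.log ((S ^ r - 1) / S) =
        r * Real.log S + Real.log (1 - S ^ (-r)) - Real.log S := by
      rw [Real.log_div (by nlinarith) (by linarith), hlog1]
    have hlogS : 0 < Real.log S := Real.log_pos hS
    rw [hgdef]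
    simp only
    rw [hlogt]
    field_simp
    try ring
    try exact Or.inl trivial
  have hh_lim : Tendsto (fun S => g S + c / Real.log S) atTop (nhds ((n : ℝ) * (1 - r))) := by
    have h3 : Tendsto (fun S : ℝ => c / Real.log S) atTop (nhds 0) :=
      tendsto_const_nhds.div_atTop Real.tendsto_log_atTop
    have := hg_lim.add h3
    simpa using this
  -- squeeze
  refine tendsto_of_tendsto_of_tendsto_of_le_of_le' hg_lim hh_lim ?_ ?_
  all_goals
    filter_upwards [eventually_gt_atTop (1:ℝ)] with S hS
  all_goals
    have hS0 : (0:ℝ) < S := by linarith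
    have hSr1 : 1 < S ^ r := Real.one_lt_rpow_iff_of_pos hS0 |>.mpr (Or.inl ⟨hS, hr0⟩)
    have hSrS : S ^ r ≤ S := by
      calc S ^ r ≤ S ^ (1:ℝ) := Real.rpow_le_rpow_of_exponent_le (by linarith) hr1.le
      _ = S := Real.rpow_one S
    set t : ℝ := (S ^ r - 1) / S with htdef
    have ht0 : 0 < t := div_pos (by linarith) hS0
    have ht1 : t ≤ 1 := by
      rw [htdef, div_le_one hS0]; linarith
    obtain ⟨hlow, hup⟩ := key t ht0 ht1
    have hlogS : 0 < Real.log S := Real.log_pos hS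
    have hPpos : 0 < (P {ω | (∑ i, Z i ω) < t}).toReal :=
      lt_of_lt_of_le (by positivity) hlow
    have hloglow : Real.log ((t / (3 * n)) ^ n) ≤
        Real.log ((P {ω | (∑ i, Z i ω) < t}).toReal) :=
      Real.log_le_log (by positivity) hlow
    have hlogup : Real.log ((P {ω | (∑ i, Z i ω) < t}).toReal) ≤ Real.log (t ^ n) :=
      Real.log_le_log hPpos hup
    rw [Real.log_pow] at hlogup
    rw [Real.log_pow, Real.log_div (ne_of_gt ht0) (by positivity)] at hloglow
  · -- g S ≤ f S
    rw [hgdef]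
    simp only
    rw [div_le_div_iff_of_pos_right hlogS]
    have : (n : ℝ) * Real.log t ≥ Real.log ((P {ω | (∑ i, Z i ω) < t}).toReal) → True := fun _ => trivial
    nlinarith [hlogup]
  · -- f S ≤ g S + c / log S
    rw [hgdef]
    simp only
    rw [← add_div, div_le_div_iff_of_pos_right hlogS]
    nlinarith [hloglow]
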